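/- Mehler's formula in monic normalization: for any scalar $\rho$, $\sum_{n\ge 0}\frac{2^n}{n!}H_n(\rho)\,H_n(x)\,t^n=\dfrac{1}{\sqrt{1-t^2}}\exp\Big(\dfrac{2x\rho t-(x^2+\rho^2)t^2}{1-t^2}\Big)$, valid for $|t|<1$ (or as formal power series in $t$). -/

import Mathlib

open Finset

/-- Monic Hermite polynomials: `x H_n = H_{n+1} + (n/2) H_{n-1}`, `H_0 = 1`, `H_1 = X`. -/
noncomputable def hermiteM : ℕ → Polynomial ℝ
  | 0 => 1
  | 1 => Polynomial.X
  | (n + 2) => Polynomial.X * hermiteM (n + 1) - Polynomial.C (((n : ℝ) + 1) / 2) * hermiteM n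

namespace MehlerAux

lemma eval_rec (x : ℝ) (n : ℕ) :
    (hermiteM (n + 2)).eval x
      = x * (hermiteM (n + 1)).eval x - ((n : ℝ) + 1) / 2 * (hermiteM n).eval x := by
  rw [show hermiteM (n+2) = Polynomial.X * hermiteM (n + 1)
      - Polynomial.C (((n : ℝ) + 1) / 2) * hermiteM n from rfl]
  simp

noncomputable def a (x ρ : ℝ) (n : ℕ) : ℝ :=
  (2 : ℝ) ^ n / (n.factorial : ℝ) * (hermiteM n).eval ρ * (hermiteM n).eval x

lemma e0 (x : ℝ) : (hermiteM 0).eval x = 1 := by simp [hermiteM]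
lemma e1 (x : ℝ) : (hermiteM 1).eval x = x := by simp [hermiteM]
lemma e2 (x : ℝ) : (hermiteM 2).eval x = x^2 - 1/2 := by
  rw [show (2:ℕ) = 0+2 from rfl, eval_rec, e1, e0]; push_cast; ring
lemma e3 (x : ℝ) : (hermiteM 3).eval x = x^3 - 3/2*x := by
  rw [show (3:ℕ) = 1+2 from rfl, eval_rec, e2, e1]; push_cast; ring
lemma e4 (x : ℝ) : (hermiteM 4).eval x = x^4 - 3*x^2 + 3/4 := by
  rw [show (4:ℕ) = 2+2 from rfl, eval_rec, e3, e2]; push_cast; ring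

lemma aval (x ρ : ℝ) :
    a x ρ 0 = 1 ∧ a x ρ 1 = 2*ρ*x ∧ a x ρ 2 = 2*(ρ^2-1/2)*(x^2-1/2)
      ∧ a x ρ 3 = 4/3*(ρ^3-3/2*ρ)*(x^3-3/2*x)
      ∧ a x ρ 4 = 2/3*(ρ^4-3*ρ^2+3/4)*(x^4-3*x^2+3/4) := by
  refine ⟨?_, ?_, ?_, ?_, ?_⟩ <;>
    · simp only [a, e0, e1, e2, e3, e4, Nat.factorial]
      norm_num
      try ring

lemma S0 (x ρ : ℝ) : a x ρ 1 = 2*x*ρ * a x ρ 0 := by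
  obtain ⟨h0, h1, -⟩ := aval x ρ; rw [h0, h1]; ring
lemma S1 (x ρ : ℝ) : 2 * a x ρ 2 = a x ρ 0 + 2*x*ρ * a x ρ 1 - 2*(x^2+ρ^2) * a x ρ 0 := by
  obtain ⟨h0, h1, h2, -⟩ := aval x ρ; rw [h0, h1, h2]; ring
lemma S2 (x ρ : ℝ) : 3 * a x ρ 3
    = 3 * a x ρ 1 + 2*x*ρ * a x ρ 2 + 2*x*ρ * a x ρ 0 - 2*(x^2+ρ^2) * a x ρ 1 := by
  obtain ⟨h0, h1, h2, h3, -⟩ := aval x ρ; rw [h0, h1, h2, h3]; ring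
lemma S3 (x ρ : ℝ) : 4 * a x ρ 4
    = 5 * a x ρ 2 - a x ρ 0 + 2*x*ρ * a x ρ 3 + 2*x*ρ * a x ρ 1 - 2*(x^2+ρ^2) * a x ρ 2 := by
  obtain ⟨h0, h1, h2, h3, h4⟩ := aval x ρ; rw [h0, h1, h2, h3, h4]; ring

lemma rec5 (x ρ : ℝ) (n : ℕ) :
    ((n : ℝ) + 5) * a x ρ (n + 5)
      = 2 * x * ρ * a x ρ (n + 4) + (2 * ((n : ℝ) + 4) - 1 - 2 * x ^ 2 - 2 * ρ ^ 2) * a x ρ (n + 3)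
        + 2 * x * ρ * a x ρ (n + 2) - ((n : ℝ) + 2) * a x ρ (n + 1) := by
  have hfac : ∀ m : ℕ, ((Nat.factorial m : ℝ)) ≠ 0 := fun m => by
    exact_mod_cast (Nat.factorial_pos m).ne'
  simp only [a, show n+5 = (n+3)+2 from rfl, show n+4 = (n+2)+2 from rfl,
    show n+3 = (n+1)+2 from rfl, show n+2 = n+2 from rfl, eval_rec]
  simp only [show (n+1)+2 = n+3 from rfl, show (n+2)+2=n+4 from rfl, show (n+3)+2=n+5 from rfl]
  simp only [Nat.factorial_succ, show n+5 = (n+4)+1 from rfl, show n+4=(n+3)+1 from rfl,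
    show n+3=(n+2)+1 from rfl, show n+2=(n+1)+1 from rfl, show n+1 = n+1 from rfl]
  push_cast
  field_simp
  ring

noncomputable def s (n : ℕ) : ℝ := Real.sqrt ((n.factorial : ℝ) / 2 ^ n)

lemma s_pos (n : ℕ) : 0 < s n :=
  Real.sqrt_pos.mpr (div_pos (by exact_mod_cast n.factorial_pos) (by positivity))

lemma s_succ (n : ℕ) : s (n + 1) = s n * Real.sqrt (((n : ℝ) + 1) / 2) := by
  rw [s, s, ← Real.sqrt_mul (by positivity)]
  congr 1
  rw [Nat.factorial_succ]
  push_cast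
  field_simp
  ring

lemma growth (x ℓ : ℝ) (hℓ : 1 < ℓ) :
    ∃ C : ℝ, 0 ≤ C ∧ ∀ n : ℕ, |(hermiteM n).eval x| ≤ C * ℓ ^ n * s n := by
  have hℓ0 : 0 < ℓ := lt_trans one_pos hℓ
  set δ : ℝ := ℓ - 1/ℓ with hδdef
  have hδ : 0 < δ := by
    have : 1/ℓ < 1 := by rw [div_lt_one hℓ0]; exact hℓ
    simp only [hδdef]; linarith
  obtain ⟨N, hN⟩ := exists_nat_ge (2 * x^2 / δ^2)
  have key : ∀ m : ℕ, (N : ℝ) ≤ (m : ℝ) + 1 →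
      |x| * ℓ + Real.sqrt (((m : ℝ) + 1)/2) ≤ ℓ^2 * Real.sqrt (((m : ℝ) + 2)/2) := by
    intro m hm
    set u := Real.sqrt (((m : ℝ) + 1)/2) with hu
    have hu0 : 0 ≤ u := Real.sqrt_nonneg _
    have h1 : x^2/δ^2 ≤ ((m : ℝ) + 1)/2 := by
      have h2 : 2 * x^2/δ^2 ≤ (N : ℝ) := hN
      have h3 : 2 * x^2/δ^2 = 2 * (x^2/δ^2) := by ring
      linarith
    have h2 : |x|/δ ≤ u := by
      have h3 : Real.sqrt (x^2/δ^2) ≤ u := Real.sqrt_le_sqrt h1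
      rwa [Real.sqrt_div (sq_nonneg x), Real.sqrt_sq_eq_abs, Real.sqrt_sq_eq_abs,
        abs_of_pos hδ] at h3
    have huge : |x| ≤ δ * u := (div_le_iff₀' hδ).mp h2
    have hw : u ≤ Real.sqrt (((m : ℝ) + 2)/2) :=
      Real.sqrt_le_sqrt (by linarith)
    have hδu : δ * u * ℓ = ℓ^2 * u - u := by
      rw [hδdef, sub_mul, sub_mul, div_mul_eq_mul_div, one_mul, div_mul_cancel₀ _ hℓ0.ne']; ring
    nlinarith [Real.sqrt_nonneg (((m : ℝ) + 2)/2)]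
  set C : ℝ := ∑ k ∈ range (N + 2), |(hermiteM k).eval x| / (ℓ ^ k * s k) with hC
  have hC0 : 0 ≤ C := Finset.sum_nonneg fun k _ =>
    div_nonneg (abs_nonneg _) (mul_pos (pow_pos hℓ0 k) (s_pos k)).le
  refine ⟨C, hC0, ?_⟩
  have base : ∀ k, k ≤ N + 1 → |(hermiteM k).eval x| ≤ C * ℓ ^ k * s k := by
    intro k hk
    have hmem : k ∈ range (N + 2) := mem_range.mpr (by omega)
    have h1 : |(hermiteM k).eval x| / (ℓ ^ k * s k) ≤ C :=
      Finset.single_le_sum (f := fun k => |(hermiteM k).eval x| / (ℓ ^ k * s k))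
        (fun i _ => div_nonneg (abs_nonneg _) (mul_pos (pow_pos hℓ0 i) (s_pos i)).le) hmem
    have hpos : 0 < ℓ ^ k * s k := mul_pos (pow_pos hℓ0 k) (s_pos k)
    calc |(hermiteM k).eval x|
        = |(hermiteM k).eval x| / (ℓ ^ k * s k) * (ℓ ^ k * s k) := by rw [div_mul_cancel₀ _ hpos.ne']
      _ ≤ C * (ℓ ^ k * s k) := mul_le_mul_of_nonneg_right h1 hpos.le
      _ = C * ℓ ^ k * s k := by ring
  intro n
  induction n using Nat.strong_induction_on with
  | _ n ih =>
    rcases le_or_gt n (N + 1) with h | h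
    · exact base n h
    · obtain ⟨m, rfl⟩ : ∃ m, n = m + 2 := ⟨n - 2, by omega⟩
      have hm : (N : ℝ) ≤ (m : ℝ) + 1 := by
        have : N ≤ m + 1 := by omega
        exact_mod_cast this
      have h1 := ih (m + 1) (by omega)
      have h0 := ih m (by omega)
      set u := Real.sqrt (((m : ℝ) + 1)/2) with hudef
      have hu0 : 0 < u := Real.sqrt_pos.mpr (by positivity)
      have hs1 : s (m + 1) = s m * u := s_succ m
      have hs2 : s (m + 2) = s (m + 1) * Real.sqrt (((m : ℝ) + 2)/2) := by
        rw [s_succ (m + 1)]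
        congr 2
        push_cast
        ring
      have hu2 : u ^ 2 = ((m : ℝ) + 1)/2 := Real.sq_sqrt (by positivity)
      have tri : |(hermiteM (m + 2)).eval x|
          ≤ |x| * |(hermiteM (m + 1)).eval x| + (((m : ℝ) + 1)/2) * |(hermiteM m).eval x| := by
        rw [eval_rec]
        calc |x * (hermiteM (m+1)).eval x - ((m : ℝ) + 1)/2 * (hermiteM m).eval x|
            ≤ |x * (hermiteM (m+1)).eval x| + |((m : ℝ) + 1)/2 * (hermiteM m).eval x| :=
              abs_sub _ _
          _ = |x| * |(hermiteM (m+1)).eval x| + (((m : ℝ) + 1)/2) * |(hermiteM m).eval x| := by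
              rw [abs_mul, abs_mul, abs_of_nonneg (by positivity : (0:ℝ) ≤ ((m : ℝ) + 1)/2)]
      have hkey := key m hm
      have step : |x| * (C * ℓ ^ (m+1) * s (m+1)) + (((m : ℝ) + 1)/2) * (C * ℓ ^ m * s m)
          ≤ C * ℓ ^ (m + 2) * s (m + 2) := by
        have e1 : |x| * (C * ℓ ^ (m+1) * s (m+1)) + (((m : ℝ) + 1)/2) * (C * ℓ ^ m * s m)
            = C * ℓ ^ m * s (m + 1) * (|x| * ℓ + u) := by
          rw [hs1, ← hu2]
          have : u ^ 2 * (C * ℓ ^ m * s m) = C * ℓ ^ m * (s m * u) * u := by ring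
          rw [this]
          ring
        have e2 : C * ℓ ^ (m + 2) * s (m + 2)
            = C * ℓ ^ m * s (m + 1) * (ℓ^2 * Real.sqrt (((m : ℝ) + 2)/2)) := by
          rw [hs2]; ring
        rw [e1, e2]
        have hpos : 0 ≤ C * ℓ ^ m * s (m + 1) :=
          mul_nonneg (mul_nonneg hC0 (pow_pos hℓ0 m).le) (s_pos (m+1)).le
        exact mul_le_mul_of_nonneg_left hkey hpos
      calc |(hermiteM (m + 2)).eval x|
          ≤ |x| * |(hermiteM (m + 1)).eval x| + (((m : ℝ) + 1)/2) * |(hermiteM m).eval x| := tri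
        _ ≤ |x| * (C * ℓ ^ (m+1) * s (m+1)) + (((m : ℝ) + 1)/2) * (C * ℓ ^ m * s m) := by
            have b1 : |x| * |(hermiteM (m + 1)).eval x| ≤ |x| * (C * ℓ ^ (m+1) * s (m+1)) :=
              mul_le_mul_of_nonneg_left h1 (abs_nonneg x)
            have b2 : (((m : ℝ) + 1)/2) * |(hermiteM m).eval x|
                ≤ (((m : ℝ) + 1)/2) * (C * ℓ ^ m * s m) :=
              mul_le_mul_of_nonneg_left h0 (by positivity)
            linarith
        _ ≤ C * ℓ ^ (m + 2) * s (m + 2) := step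


lemma abound (x ρ Λ : ℝ) (hΛ : 1 < Λ) :
    ∃ C : ℝ, 0 ≤ C ∧ ∀ n : ℕ, |a x ρ n| ≤ C * Λ ^ n := by
  set ℓ := Real.sqrt Λ with hℓdef
  have hΛ0 : (0:ℝ) < Λ := lt_trans one_pos hΛ
  have hℓ : 1 < ℓ := by
    rw [hℓdef, show (1:ℝ) = Real.sqrt 1 by simp]
    exact Real.sqrt_lt_sqrt zero_le_one hΛ
  have hℓsq : ℓ ^ 2 = Λ := Real.sq_sqrt hΛ0.le
  obtain ⟨Cx, hCx0, hCx⟩ := growth x ℓ hℓ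
  obtain ⟨Cρ, hCρ0, hCρ⟩ := growth ρ ℓ hℓ
  refine ⟨Cρ * Cx, mul_nonneg hCρ0 hCx0, fun n => ?_⟩
  have hfac : (0:ℝ) < (n.factorial : ℝ) := by exact_mod_cast n.factorial_pos
  have hpos : (0:ℝ) < (2:ℝ)^n / (n.factorial : ℝ) := by positivity
  have hssq : s n ^ 2 = (n.factorial : ℝ) / 2 ^ n :=
    Real.sq_sqrt (by positivity)
  have h1 : |a x ρ n| ≤ (2:ℝ)^n / (n.factorial : ℝ) * (Cρ * ℓ^n * s n) * (Cx * ℓ^n * s n) := by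
    rw [a, abs_mul, abs_mul, abs_of_pos hpos]
    have hρn : 0 ≤ Cρ * ℓ^n * s n := le_trans (abs_nonneg _) (hCρ n)
    exact mul_le_mul (mul_le_mul_of_nonneg_left (hCρ n) hpos.le) (hCx n) (abs_nonneg _)
      (mul_nonneg hpos.le hρn)
  have h2 : (2:ℝ)^n / (n.factorial : ℝ) * (Cρ * ℓ^n * s n) * (Cx * ℓ^n * s n)
      = Cρ * Cx * (ℓ^2)^n * (s n ^ 2 * ((2:ℝ)^n / (n.factorial : ℝ))) := by
    ring
  rw [h2, hssq, hℓsq] at h1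
  have h3 : (n.factorial : ℝ) / 2^n * ((2:ℝ)^n / (n.factorial : ℝ)) = 1 := by
    field_simp
  rw [h3, mul_one] at h1
  exact h1

noncomputable def L (x ρ : ℝ) (z : ℝ) : ℝ := ∑' n, a x ρ n * z ^ n

lemma setup (x ρ t : ℝ) (ht : |t| < 1) :
    Summable (fun n => a x ρ n * t ^ n) ∧
      Summable (fun n => a x ρ n * ((n : ℝ) * t ^ (n - 1))) ∧
      HasDerivAt (L x ρ) (∑' n, a x ρ n * ((n : ℝ) * t ^ (n - 1))) t := by
  set r : ℝ := (|t| + 1) / 2 with hr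
  have htr : |t| < r := by rw [hr]; linarith
  have hr0 : 0 < r := lt_of_le_of_lt (abs_nonneg t) htr
  have hr1 : r < 1 := by rw [hr]; linarith
  set Λ : ℝ := (1 + 1 / r) / 2 with hΛdef
  have h1r : 1 < 1 / r := (one_lt_div hr0).mpr hr1
  have hΛ : 1 < Λ := by rw [hΛdef]; linarith
  have hΛ0 : 0 < Λ := lt_trans one_pos hΛ
  obtain ⟨C, hC0, hC⟩ := abound x ρ Λ hΛ
  set q : ℝ := Λ * r with hq
  have hq0 : 0 < q := mul_pos hΛ0 hr0
  have hqval : q = (r + 1) / 2 := by rw [hq, hΛdef]; field_simp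
  have hq1 : q < 1 := by rw [hqval]; linarith
  have hsummain : Summable (fun n => a x ρ n * t ^ n) := by
    refine Summable.of_norm_bounded
      ((summable_geometric_of_lt_one hq0.le hq1).mul_left C) (fun n => ?_)
    rw [Real.norm_eq_abs, abs_mul, abs_pow]
    calc |a x ρ n| * |t| ^ n ≤ (C * Λ ^ n) * r ^ n := by
          exact mul_le_mul (hC n) (pow_le_pow_left₀ (abs_nonneg t) htr.le n)
            (pow_nonneg (abs_nonneg t) n) (by positivity)
      _ = C * q ^ n := by rw [hq, mul_pow]; ring
  have hsum_nq : Summable (fun n : ℕ => (n : ℝ) * q ^ (n - 1)) := by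
    have h := summable_pow_mul_geometric_of_norm_lt_one 1
      (r := q) (by rw [Real.norm_eq_abs, abs_of_pos hq0]; exact hq1)
    have hg : Summable (fun n : ℕ => q ^ n) := summable_geometric_of_lt_one hq0.le hq1
    have h2 : Summable (fun n : ℕ => ((n : ℝ) + 1) * q ^ n) := by
      simpa [add_mul, one_mul, pow_one] using h.add hg
    have h3 : Summable (fun n : ℕ => ((n + 1 : ℕ) : ℝ) * q ^ ((n + 1) - 1)) := by
      push_cast
      simpa using h2
    exact (summable_nat_add_iff 1).mp h3
  have hu : Summable (fun n : ℕ => C * Λ * ((n : ℝ) * q ^ (n - 1))) :=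
    hsum_nq.mul_left (C * Λ)
  have hbound : ∀ (n : ℕ), ∀ y ∈ Metric.ball (0:ℝ) r,
      ‖a x ρ n * ((n : ℝ) * y ^ (n - 1))‖ ≤ C * Λ * ((n : ℝ) * q ^ (n - 1)) := by
    intro n y hy
    have hyr : |y| ≤ r := by
      have := Metric.mem_ball.mp hy
      rw [Real.dist_eq, sub_zero] at this
      exact this.le
    match n with
    | 0 => simp
    | (m + 1) =>
      have e1 : ‖a x ρ (m+1) * (((m + 1 : ℕ) : ℝ) * y ^ ((m+1) - 1))‖
          = |a x ρ (m+1)| * (((m : ℝ) + 1) * |y| ^ m) := by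
        rw [Real.norm_eq_abs, abs_mul, abs_mul, abs_pow, Nat.add_sub_cancel,
          Nat.cast_add, Nat.cast_one, abs_of_nonneg (by positivity : (0:ℝ) ≤ (m:ℝ) + 1)]
      rw [e1]
      have e2 : |a x ρ (m+1)| * (((m : ℝ) + 1) * |y| ^ m)
          ≤ (C * Λ ^ (m+1)) * (((m : ℝ) + 1) * r ^ m) := by
        refine mul_le_mul (hC (m+1)) ?_ (by positivity) (by positivity)
        exact mul_le_mul_of_nonneg_left (pow_le_pow_left₀ (abs_nonneg y) hyr m)
          (by positivity)
      refine le_trans e2 (le_of_eq ?_)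
      rw [Nat.add_sub_cancel, hq, mul_pow]
      push_cast
      ring
  have hg0 : Summable (fun n : ℕ => a x ρ n * (0:ℝ) ^ n) :=
    summable_of_ne_finset_zero (s := {0}) (fun n hn => by
      rw [zero_pow (by simpa using hn), mul_zero])
  have htmem : t ∈ Metric.ball (0:ℝ) r := by
    rw [Metric.mem_ball, Real.dist_eq, sub_zero]; exact htr
  refine ⟨hsummain, Summable.of_norm_bounded hu (fun n => hbound n t htmem), ?_⟩
  exact hasDerivAt_tsum_of_isPreconnected hu Metric.isOpen_ball
    ((convex_ball (0:ℝ) r).isPreconnected)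
    (fun n y _ => (hasDerivAt_pow n y).const_mul (a x ρ n)) hbound
    (Metric.mem_ball_self hr0) hg0 htmem


lemma hasSum_shift {f : ℕ → ℝ} {S : ℝ} (k : ℕ) (h : HasSum f S) :
    HasSum (fun n => if k ≤ n then f (n - k) else 0) S := by
  have hfun : ((fun n => if k ≤ n then f (n - k) else 0) ∘ (· + k)) = f := by
    funext n
    simp
  refine (Function.Injective.hasSum_iff (add_left_injective k) ?_).mp
    (by rw [hfun]; exact h)
  intro m hm
  have hk : ¬ k ≤ m := by
    intro hk
    exact hm ⟨m - k, show m - k + k = m by omega⟩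
  exact if_neg hk

lemma key3 (x ρ t : ℝ) (ht : |t| < 1) :
    (1 - t ^ 2) ^ 2 * (∑' n, a x ρ n * ((n : ℝ) * t ^ (n - 1)))
      = (t * (1 - t ^ 2) + 2 * x * ρ * (1 + t ^ 2) - 2 * (x ^ 2 + ρ ^ 2) * t) * L x ρ t := by
  obtain ⟨hsumL, hsumD, -⟩ := setup x ρ t ht
  set Lv := L x ρ t with hLv
  set Dv := ∑' n, a x ρ n * ((n : ℝ) * t ^ (n - 1)) with hDv
  have hL : HasSum (fun n => a x ρ n * t ^ n) Lv := hsumL.hasSum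
  have hD : HasSum (fun n => a x ρ n * ((n : ℝ) * t ^ (n - 1))) Dv := hsumD.hasSum
  have hD1 : HasSum (fun n : ℕ => a x ρ (n + 1) * (((n : ℝ) + 1) * t ^ n)) Dv := by
    have h := (hasSum_nat_add_iff'
      (f := fun n => a x ρ n * ((n : ℝ) * t ^ (n - 1))) 1).mpr hD
    simpa using h
  have hT2 := hasSum_shift 2 (hD1.mul_right (t ^ 2))
  have hT3 := hasSum_shift 4 (hD1.mul_right (t ^ 4))
  have hT4 := hasSum_shift 1 (hL.mul_right t)
  have hT5 := hasSum_shift 3 (hL.mul_right (t ^ 3))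
  have hT7 := hasSum_shift 2 (hL.mul_right (t ^ 2))
  have Htot := ((((((hD1.sub (hT2.mul_left 2)).add hT3).sub hT4).add hT5).sub
      (hL.mul_left (2 * x * ρ))).sub (hT7.mul_left (2 * x * ρ))).add
      (hT4.mul_left (2 * (x ^ 2 + ρ ^ 2)))
  have hV : (0 : ℝ) = Dv - 2 * (Dv * t ^ 2) + Dv * t ^ 4 - Lv * t + Lv * t ^ 3
      - 2 * x * ρ * Lv - 2 * x * ρ * (Lv * t ^ 2) + 2 * (x ^ 2 + ρ ^ 2) * (Lv * t) := by
    refine HasSum.unique ?_ Htot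
    convert hasSum_zero with n
    rcases Nat.lt_or_ge n 4 with h | h
    · interval_cases n
      · norm_num
        linear_combination S0 x ρ
      · norm_num
        linear_combination t * S1 x ρ
      · norm_num
        linear_combination t ^ 2 * S2 x ρ
      · norm_num
        linear_combination t ^ 3 * S3 x ρ
    · obtain ⟨m, rfl⟩ : ∃ m, n = m + 4 := ⟨n - 4, by omega⟩
      have c1 : 1 ≤ m + 4 := by omega
      have c2 : 2 ≤ m + 4 := by omega
      have c3 : 3 ≤ m + 4 := by omega
      have c4 : 4 ≤ m + 4 := by omega
      simp only [if_pos c1, if_pos c2, if_pos c3, if_pos c4]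
      simp only [show m + 4 - 2 = m + 2 from rfl, show m + 4 - 4 = m from rfl,
        show m + 4 - 1 = m + 3 from rfl, show m + 4 - 3 = m + 1 from rfl,
        show m + 4 + 1 = m + 5 from rfl, show m + 2 + 1 = m + 3 from rfl]
      push_cast
      linear_combination t ^ (m + 4) * rec5 x ρ m
  linear_combination -hV

lemma one_sub_sq_pos {t : ℝ} (ht : |t| < 1) : 0 < 1 - t ^ 2 := by
  have h : t ^ 2 < 1 := by
    rw [← sq_abs]
    nlinarith [abs_nonneg t]
  linarith

lemma F_deriv (x ρ t : ℝ) (ht : |t| < 1) :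
    HasDerivAt (fun z => L x ρ z * Real.sqrt (1 - z ^ 2) *
      Real.exp (-((2 * x * ρ * z - (x ^ 2 + ρ ^ 2) * z ^ 2) / (1 - z ^ 2)))) 0 t := by
  have h1t : (0:ℝ) < 1 - t ^ 2 := one_sub_sq_pos ht
  have hne : 1 - t ^ 2 ≠ 0 := ne_of_gt h1t
  have hs0 : 0 < Real.sqrt (1 - t ^ 2) := Real.sqrt_pos.mpr h1t
  have hs2 : Real.sqrt (1 - t ^ 2) ^ 2 = 1 - t ^ 2 := Real.sq_sqrt h1t.le
  obtain ⟨hsumL, hsumD, hder⟩ := setup x ρ t ht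
  set Dv := ∑' n, a x ρ n * ((n : ℝ) * t ^ (n - 1)) with hDvdef
  have hinner : HasDerivAt (fun z : ℝ => 1 - z ^ 2) (-(2 * t)) t := by
    have h := (hasDerivAt_pow 2 t).const_sub 1
    refine h.congr_deriv ?_
    push_cast
    ring
  have hsqrt0 : HasDerivAt (fun z : ℝ => Real.sqrt (1 - z ^ 2))
      (1 / (2 * Real.sqrt (1 - t ^ 2)) * -(2 * t)) t :=
    (Real.hasDerivAt_sqrt hne).comp t hinner
  have hsqrt : HasDerivAt (fun z : ℝ => Real.sqrt (1 - z ^ 2))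
      (-t * Real.sqrt (1 - t ^ 2) / (1 - t ^ 2)) t := by
    convert hsqrt0 using 1
    rw [div_eq_iff hne, one_div, mul_comm]
    field_simp
    linear_combination (-t) * hs2
  have hnum : HasDerivAt (fun z : ℝ => 2 * x * ρ * z - (x ^ 2 + ρ ^ 2) * z ^ 2)
      (2 * x * ρ - (x ^ 2 + ρ ^ 2) * (2 * t)) t := by
    have h1 : HasDerivAt (fun z : ℝ => 2 * x * ρ * z) (2 * x * ρ) t := by
      simpa using (hasDerivAt_id t).const_mul (2 * x * ρ)
    have h2 : HasDerivAt (fun z : ℝ => (x ^ 2 + ρ ^ 2) * z ^ 2)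
        ((x ^ 2 + ρ ^ 2) * (2 * t)) t := by
      have h := (hasDerivAt_pow 2 t).const_mul (x ^ 2 + ρ ^ 2)
      refine h.congr_deriv ?_
      push_cast
      ring
    exact h1.sub h2
  have hφ := hnum.div hinner hne
  have hexp := hφ.neg.exp
  have hfull := (hder.mul hsqrt).mul hexp
  refine hfull.congr_deriv (Eq.symm ?_)
  simp only [Pi.mul_apply, Pi.neg_apply, Pi.div_apply]
  have hk := key3 x ρ t ht
  rw [← hDvdef] at hk
  set s := Real.sqrt (1 - t ^ 2)
  set Lv := L x ρ t
  set E := Real.exp (-((2 * x * ρ * t - (x ^ 2 + ρ ^ 2) * t ^ 2) / (1 - t ^ 2)))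
  field_simp
  linear_combination (-(s * E)) * hk

lemma L_zero (x ρ : ℝ) : L x ρ 0 = 1 := by
  rw [L, tsum_eq_single 0 (fun n hn => by
    rw [zero_pow hn, mul_zero])]
  have h := (aval x ρ).1
  simp [h]

end MehlerAux

open MehlerAux in
/-- Mehler's formula in monic normalization. -/
theorem stmt10 (ρ x t : ℝ) (ht : |t| < 1) :
    HasSum (fun n => (2 : ℝ) ^ n / (n.factorial : ℝ) *
        (hermiteM n).eval ρ * (hermiteM n).eval x * t ^ n)
      (1 / Real.sqrt (1 - t ^ 2) *
        Real.exp ((2 * x * ρ * t - (x ^ 2 + ρ ^ 2) * t ^ 2) / (1 - t ^ 2))) := by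
  classical
  have hsum : Summable (fun n => a x ρ n * t ^ n) := (setup x ρ t ht).1
  set F : ℝ → ℝ := fun z => L x ρ z * Real.sqrt (1 - z ^ 2) *
      Real.exp (-((2 * x * ρ * z - (x ^ 2 + ρ ^ 2) * z ^ 2) / (1 - z ^ 2))) with hFdef
  have habs : ∀ y : ℝ, y ∈ Set.Icc (min t 0) (max t 0) → |y| < 1 := by
    intro y hy
    rw [abs_lt]
    rcases abs_lt.mp ht with ⟨h1, h2⟩
    have hy1 := hy.1
    have hy2 := hy.2
    constructor
    · have : -1 < min t 0 := by
        rcases le_total t 0 with h | h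
        · rw [min_eq_left h]; linarith
        · rw [min_eq_right h]; linarith
      linarith
    · have : max t 0 < 1 := by
        rcases le_total t 0 with h | h
        · rw [max_eq_right h]; linarith
        · rw [max_eq_left h]; linarith
      linarith
  have hFconst : F t = F 0 := by
    have hmm : min t 0 ≤ max t 0 := min_le_max
    have hcont : ContinuousOn F (Set.Icc (min t 0) (max t 0)) := fun y hy =>
      ((F_deriv x ρ y (habs y hy)).continuousAt).continuousWithinAt
    have hderiv : ∀ y ∈ Set.Ico (min t 0) (max t 0), HasDerivWithinAt F 0 (Set.Ici y) y :=
      fun y hy => ((F_deriv x ρ y (habs y ⟨hy.1, hy.2.le⟩)).hasDerivWithinAt)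
    have hconst := constant_of_has_deriv_right_zero hcont hderiv
    have htmem : t ∈ Set.Icc (min t 0) (max t 0) :=
      ⟨min_le_left t 0, le_max_left t 0⟩
    have h0mem : (0:ℝ) ∈ Set.Icc (min t 0) (max t 0) :=
      ⟨min_le_right t 0, le_max_right t 0⟩
    have ht' := hconst t htmem
    have h0' := hconst 0 h0mem
    rw [ht', h0']
  have hF0 : F 0 = 1 := by
    rw [hFdef]
    simp [L_zero x ρ]
  have h1t : (0:ℝ) < 1 - t ^ 2 := one_sub_sq_pos ht
  have hs0 : 0 < Real.sqrt (1 - t ^ 2) := Real.sqrt_pos.mpr h1t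
  have hLval : L x ρ t = 1 / Real.sqrt (1 - t ^ 2) *
      Real.exp ((2 * x * ρ * t - (x ^ 2 + ρ ^ 2) * t ^ 2) / (1 - t ^ 2)) := by
    have h := hFconst.trans hF0
    rw [hFdef] at h
    simp only [Real.exp_neg] at h
    have hexp : 0 < Real.exp ((2 * x * ρ * t - (x ^ 2 + ρ ^ 2) * t ^ 2) / (1 - t ^ 2)) :=
      Real.exp_pos _
    field_simp at h ⊢
    linarith [h]
  have hfin : HasSum (fun n => a x ρ n * t ^ n) (L x ρ t) := hsum.hasSum
  rw [hLval] at hfin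
  exact hfin
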